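/- Let H : ℝ → ℝ be continuously differentiable, vanishing outside [−θ, θ], equal to 1 on [−θ+δ, θ−δ] where 0 < δ < θ ≤ π/4, with 0 ≤ H ≤ 1 and ‖H'‖_∞ ≤ 2/δ, and define ψ(r cos β, r sin β) = H(β − π/2) for 0 ≤ r ≤ cos θ and ψ = 0 for r > cos θ. Then ψ ≤ 1_{S(cos θ, θ)} pointwise, where S(cos θ, θ) is the sector of radius cos θ and angular half-width θ about the positive y-axis, and ∫_{ℝ²} (1_{S(cos θ, θ)} − ψ) dx ≤ 2δ. -/

import Mathlib

open Real MeasureTheory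

/-- The sector of radius `r₀` and angular half-width `φ₀` around the positive y-axis. -/
def sector (r₀ φ₀ : ℝ) : Set (ℝ × ℝ) :=
  {p | ∃ r β : ℝ, 0 ≤ r ∧ r ≤ r₀ ∧ |β - π/2| ≤ φ₀ ∧ p = (r * Real.cos β, r * Real.sin β)}

lemma sqrt_polar' {r β : ℝ} (hr : 0 ≤ r) :
    Real.sqrt ((r * Real.cos β)^2 + (r * Real.sin β)^2) = r := by
  have h : (r * Real.cos β)^2 + (r * Real.sin β)^2 = r^2 := by
    nlinarith [Real.sin_sq_add_cos_sq β]
  rw [h, Real.sqrt_sq hr]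

lemma arg_polar' {r β : ℝ} (hr : 0 < r) (hβ : β ∈ Set.Ioc (-π) π) :
    Complex.arg (((r * Real.cos β : ℝ) : ℂ) + ((r * Real.sin β : ℝ) : ℂ) * Complex.I) = β := by
  have h : (((r * Real.cos β : ℝ) : ℂ) + ((r * Real.sin β : ℝ) : ℂ) * Complex.I)
      = (r : ℂ) * (Complex.cos β + Complex.sin β * Complex.I) := by
    push_cast [Complex.ofReal_cos, Complex.ofReal_sin]; ring
  rw [h, Complex.arg_real_mul _ hr, Complex.arg_cos_add_sin_mul_I hβ]

lemma polar_repr' (p : ℝ × ℝ) :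
    p = (Real.sqrt (p.1^2 + p.2^2) * Real.cos (Complex.arg ((p.1 : ℂ) + (p.2 : ℂ) * Complex.I)),
         Real.sqrt (p.1^2 + p.2^2) * Real.sin (Complex.arg ((p.1 : ℂ) + (p.2 : ℂ) * Complex.I))) := by
  set z : ℂ := (p.1 : ℂ) + (p.2 : ℂ) * Complex.I with hz
  have hre : z.re = p.1 := by simp [hz]
  have him : z.im = p.2 := by simp [hz]
  have habs : ‖z‖ = Real.sqrt (p.1^2 + p.2^2) := by
    rw [Complex.norm_def, Complex.normSq_apply, hre, him]; ring_nf
  have k1 := Complex.norm_mul_cos_arg z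
  have k2 := Complex.norm_mul_sin_arg z
  rw [hre] at k1; rw [him] at k2
  ext
  · rw [← habs]; exact k1.symm
  · rw [← habs]; exact k2.symm

lemma mem_sector_polar' {θ : ℝ} (hθ0 : 0 < θ) (h2 : θ ≤ π/4) {r β : ℝ} (hr : 0 < r)
    (hβ : β ∈ Set.Ioo (-π) π) :
    ((r * Real.cos β, r * Real.sin β) ∈ sector (Real.cos θ) θ) ↔
      (r ≤ Real.cos θ ∧ |β - π/2| ≤ θ) := by
  have hpi := Real.pi_pos
  constructor
  · rintro ⟨r', β', hr'0, hr'c, hβ', hp⟩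
    have e1 : r * Real.cos β = r' * Real.cos β' := congrArg Prod.fst hp
    have e2 : r * Real.sin β = r' * Real.sin β' := congrArg Prod.snd hp
    have hrr : r = r' := by
      rw [← sqrt_polar' hr.le (β := β), e1, e2, sqrt_polar' hr'0]
    have hβ'mem : β' ∈ Set.Ioc (-π) π := by
      rw [abs_le] at hβ'
      constructor <;> [linarith; linarith]
    have hargβ := arg_polar' hr ⟨hβ.1, hβ.2.le⟩
    rw [e1, e2, arg_polar' (hrr ▸ hr) hβ'mem] at hargβ
    rw [hrr, ← hargβ]
    exact ⟨hr'c, hβ'⟩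
  · rintro ⟨hrc, hbθ⟩
    exact ⟨r, β, hr.le, hrc, hbθ, rfl⟩

theorem stmt16 (θ δ : ℝ) (h0 : 0 < δ) (h1 : δ < θ) (h2 : θ ≤ π/4)
    (H : ℝ → ℝ) (hH1 : ContDiff ℝ 1 H)
    (hHsupp : ∀ s, (s < -θ ∨ θ < s) → H s = 0)
    (hHone : ∀ s, -θ+δ ≤ s → s ≤ θ-δ → H s = 1)
    (hH01 : ∀ s, 0 ≤ H s ∧ H s ≤ 1)
    (hH' : ∀ s, |deriv H s| ≤ 2/δ)
    (ψ : ℝ × ℝ → ℝ)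
    (hψ : ∀ p : ℝ × ℝ, ψ p =
      if Real.sqrt (p.1^2 + p.2^2) ≤ Real.cos θ then
        H ((Complex.arg ((p.1 : ℂ) + (p.2 : ℂ) * Complex.I)) - π/2)
      else 0) :
    (∀ p, ψ p ≤ Set.indicator (sector (Real.cos θ) θ) (fun _ => (1:ℝ)) p) ∧
    ∫ p : ℝ × ℝ, (Set.indicator (sector (Real.cos θ) θ) (fun _ => (1:ℝ)) p - ψ p) ≤ 2*δ := by
  have hpi := Real.pi_pos
  have hθ0 : 0 < θ := h0.trans h1
  have hθπ : θ < π/2 := lt_of_le_of_lt h2 (by linarith)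
  have hc : 0 < Real.cos θ := Real.cos_pos_of_mem_Ioo ⟨by linarith, hθπ⟩
  have hc1 : Real.cos θ ≤ 1 := Real.cos_le_one θ
  constructor
  · -- pointwise bound
    intro p
    rw [hψ p]
    by_cases hle : Real.sqrt (p.1^2 + p.2^2) ≤ Real.cos θ
    · rw [if_pos hle]
      by_cases habs : |Complex.arg ((p.1:ℂ) + (p.2:ℂ)*Complex.I) - π/2| ≤ θ
      · have hmem : p ∈ sector (Real.cos θ) θ :=
          ⟨Real.sqrt (p.1^2+p.2^2), Complex.arg ((p.1:ℂ) + (p.2:ℂ)*Complex.I),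
            Real.sqrt_nonneg _, hle, habs, polar_repr' p⟩
        rw [Set.indicator_of_mem hmem]
        exact (hH01 _).2
      · have hz : H (Complex.arg ((p.1:ℂ) + (p.2:ℂ)*Complex.I) - π/2) = 0 := by
          apply hHsupp
          rcases lt_abs.mp (not_le.mp habs) with h | h
          · right; exact h
          · left; linarith
        rw [hz]
        exact Set.indicator_nonneg (fun _ _ => zero_le_one) p
    · rw [if_neg hle]
      exact Set.indicator_nonneg (fun _ _ => zero_le_one) p
  · -- integral bound
    rw [← integral_comp_polarCoord_symm]
    have key : Set.EqOn
        (fun q : ℝ × ℝ => q.1 • (Set.indicator (sector (Real.cos θ) θ) (fun _ => (1:ℝ))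
            (polarCoord.symm q) - ψ (polarCoord.symm q)))
        (fun q : ℝ × ℝ => (Set.indicator (Set.Ioc 0 (Real.cos θ)) (fun x => x) q.1) *
          (Set.indicator (Set.Icc (π/2 - θ) (π/2 + θ)) (fun b => 1 - H (b - π/2)) q.2))
        polarCoord.target := by
      rintro ⟨r, β⟩ hq
      have hr : 0 < r := hq.1
      have hβ : β ∈ Set.Ioo (-π) π := hq.2
      have hsymm : polarCoord.symm (r, β) = (r * Real.cos β, r * Real.sin β) := rfl
      simp only [hsymm]
      have hψv : ψ (r * Real.cos β, r * Real.sin β) =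
          if r ≤ Real.cos θ then H (β - π/2) else 0 := by
        rw [hψ]
        dsimp only
        rw [sqrt_polar' hr.le, arg_polar' hr ⟨hβ.1, hβ.2.le⟩]
      rcases le_or_gt r (Real.cos θ) with hrc | hrc
      · by_cases hbθ : |β - π/2| ≤ θ
        · have hmem : (r * Real.cos β, r * Real.sin β) ∈ sector (Real.cos θ) θ :=
            (mem_sector_polar' hθ0 h2 hr hβ).mpr ⟨hrc, hbθ⟩
          have hβI : β ∈ Set.Icc (π/2 - θ) (π/2 + θ) := by
            rw [abs_le] at hbθ
            exact ⟨by linarith [hbθ.1], by linarith [hbθ.2]⟩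
          rw [Set.indicator_of_mem hmem, hψv, if_pos hrc,
            Set.indicator_of_mem (Set.mem_Ioc.mpr ⟨hr, hrc⟩),
            Set.indicator_of_mem hβI, smul_eq_mul]
        · have hnmem : (r * Real.cos β, r * Real.sin β) ∉ sector (Real.cos θ) θ :=
            fun hm => hbθ ((mem_sector_polar' hθ0 h2 hr hβ).mp hm).2
          have hz : H (β - π/2) = 0 := by
            apply hHsupp
            rcases lt_abs.mp (not_le.mp hbθ) with h | h
            · right; exact h
            · left; linarith
          have hβI : β ∉ Set.Icc (π/2 - θ) (π/2 + θ) := by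
            intro hm
            apply hbθ
            rw [abs_le]
            exact ⟨by linarith [hm.1], by linarith [hm.2]⟩
          rw [Set.indicator_of_notMem hnmem, hψv, if_pos hrc, hz,
            Set.indicator_of_notMem hβI]
          simp
      · have hnmem : (r * Real.cos β, r * Real.sin β) ∉ sector (Real.cos θ) θ :=
          fun hm => absurd ((mem_sector_polar' hθ0 h2 hr hβ).mp hm).1 (not_le.mpr hrc)
        have hrI : r ∉ Set.Ioc 0 (Real.cos θ) := fun hm => absurd hm.2 (not_le.mpr hrc)
        rw [Set.indicator_of_notMem hnmem, hψv, if_neg (not_le.mpr hrc),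
          Set.indicator_of_notMem hrI]
        simp
    rw [setIntegral_congr_fun polarCoord.open_target.measurableSet key]
    have htarget : polarCoord.target = Set.Ioi (0:ℝ) ×ˢ Set.Ioo (-π) π := rfl
    rw [htarget, Measure.volume_eq_prod, setIntegral_prod_mul]
    -- radial integral
    have hrad : (∫ x in Set.Ioi (0:ℝ), Set.indicator (Set.Ioc 0 (Real.cos θ)) (fun x => x) x)
        = (Real.cos θ)^2 / 2 := by
      rw [setIntegral_indicator measurableSet_Ioc,
        Set.inter_eq_right.mpr Set.Ioc_subset_Ioi_self,
        ← intervalIntegral.integral_of_le hc.le, integral_id]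
      norm_num
    rw [hrad]
    -- angular integral
    have hang : (∫ β in Set.Ioo (-π) π,
          Set.indicator (Set.Icc (π/2 - θ) (π/2 + θ)) (fun b => 1 - H (b - π/2)) β)
        = ∫ s in (-θ)..θ, (1 - H s) := by
      rw [setIntegral_indicator measurableSet_Icc,
        Set.inter_eq_right.mpr (Set.Icc_subset_Ioo (by linarith) (by linarith)),
        integral_Icc_eq_integral_Ioc,
        ← intervalIntegral.integral_of_le (by linarith : π/2 - θ ≤ π/2 + θ),
        intervalIntegral.integral_comp_sub_right (fun s => 1 - H s) (π/2)]
      norm_num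
    rw [hang]
    -- bound the angular integral
    have hHc : Continuous H := hH1.continuous
    have hii : ∀ a b : ℝ, IntervalIntegrable (fun s => 1 - H s) volume a b :=
      fun a b => (continuous_const.sub hHc).intervalIntegrable a b
    have hsplit : (∫ s in (-θ)..θ, (1 - H s))
        = (∫ s in (-θ)..(-θ+δ), (1 - H s)) + (∫ s in (-θ+δ)..(θ-δ), (1 - H s))
          + (∫ s in (θ-δ)..θ, (1 - H s)) := by
      rw [intervalIntegral.integral_add_adjacent_intervals (hii _ _) (hii _ _),
        intervalIntegral.integral_add_adjacent_intervals (hii _ _) (hii _ _)]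
    have hmid : (∫ s in (-θ+δ)..(θ-δ), (1 - H s)) = 0 := by
      have heq : Set.EqOn (fun s => 1 - H s) (fun _ => (0:ℝ)) (Set.uIcc (-θ+δ) (θ-δ)) := by
        intro s hs
        rw [Set.uIcc_of_le (by linarith)] at hs
        simp [hHone s hs.1 hs.2]
      rw [intervalIntegral.integral_congr heq, intervalIntegral.integral_zero]
    have hend1 : (∫ s in (-θ)..(-θ+δ), (1 - H s)) ≤ δ := by
      calc (∫ s in (-θ)..(-θ+δ), (1 - H s))
          ≤ ∫ _ in (-θ)..(-θ+δ), (1:ℝ) :=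
            intervalIntegral.integral_mono_on (by linarith) (hii _ _)
              intervalIntegrable_const (fun s _ => by linarith [(hH01 s).1])
        _ = δ := by rw [intervalIntegral.integral_const]; simp
    have hend2 : (∫ s in (θ-δ)..θ, (1 - H s)) ≤ δ := by
      calc (∫ s in (θ-δ)..θ, (1 - H s))
          ≤ ∫ _ in (θ-δ)..θ, (1:ℝ) :=
            intervalIntegral.integral_mono_on (by linarith) (hii _ _)
              intervalIntegrable_const (fun s _ => by linarith [(hH01 s).1])
        _ = δ := by rw [intervalIntegral.integral_const]; simp
    have hJ0 : 0 ≤ ∫ s in (-θ)..θ, (1 - H s) :=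
      intervalIntegral.integral_nonneg (by linarith) (fun s _ => by linarith [(hH01 s).2])
    have hJle : (∫ s in (-θ)..θ, (1 - H s)) ≤ 2*δ := by
      rw [hsplit, hmid]; linarith
    have hcsq : (Real.cos θ)^2 ≤ 1 := by nlinarith
    nlinarith [mul_le_mul_of_nonneg_right hcsq hJ0]
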